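/- arXiv:math/0009235 — 4 statements merged into one kernel-verified Lean document; each statement's English description precedes it below -/
import Mathlib

section
/- Let D ⊆ ℝⁿ be open, φ : D → ℝ a C³ function with invertible Hessian Φ = Hess φ, and set Γ^j_{kl}(x) = Σ_m φ^{jm}(x) ∂³φ/∂x^m∂x^k∂x^l (x). Then a C² curve γ : I → D (I an open interval) satisfies the geodesic equation of the A-connection, γ̈^j(t) + Σ_{k,l} Γ^j_{kl}(γ(t)) γ̇^k(t) γ̇^l(t) = 0 for all t ∈ I and all j, if and only if the curve ∇φ ∘ γ : I → ℝⁿ has vanishing second derivative, i.e., the Legendre transformation (gradient map) ∇φ carries geodesics of the A-connection to straight lines, which are the geodesics of the flat B-connection on the dual side. -/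
open Matrix Set

attribute [local instance] Matrix.normedAddCommGroup Matrix.normedSpace

/-- The continuous linear map `u ↦ A *ᵥ u` associated to a matrix `A`. -/
noncomputable def matCLM {n : ℕ} (A : Matrix (Fin n) (Fin n) ℝ) :
    (Fin n → ℝ) →L[ℝ] (Fin n → ℝ) :=
  LinearMap.toContinuousLinearMap A.mulVecLin

/-- The continuous linear functional `u ↦ ∑ j, v j * u j` associated to a vector `v`;
a function has gradient `v` at `x` iff its Fréchet derivative there is `gradCLM v`. -/
noncomputable def gradCLM {n : ℕ} (v : Fin n → ℝ) : (Fin n → ℝ) →L[ℝ] ℝ :=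
  ∑ j, v j • ContinuousLinearMap.proj j

/-- Let `D ⊆ ℝⁿ` be open, `φ : D → ℝ` a C³ function with gradient map
`Gφ`, invertible Hessian `Hφ`, and third derivatives recorded by `DH` (the Fréchet
derivative of `Hφ`; thus `φ_{mkl} = DH x (Pi.single l 1) m k`).  The A-connection has
Christoffel symbols `Γ^j_{kl} = Σ_m φ^{jm} φ_{mkl}`.  Then a C² curve `γ` in `D` defined
on the open interval `(a, b)` (with velocity `γ'` and acceleration `γ''`) satisfies the
geodesic equation `γ̈^j + Σ_{k,l} Γ^j_{kl}(γ) γ̇^k γ̇^l = 0` of the A-connection iff the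
curve `∇φ ∘ γ` has vanishing second derivative, i.e. iff its first derivative
`t ↦ Hess φ (γ t) *ᵥ γ̇(t)` (which is `(∇φ ∘ γ)'` by the chain rule) has derivative `0`
everywhere: the Legendre transformation carries A-geodesics to straight lines, the
geodesics of the flat B-connection on the dual side. -/
theorem legendre_maps_A_geodesics_to_lines {n : ℕ}
    (D : Set (Fin n → ℝ)) (hD : IsOpen D)
    (φ : (Fin n → ℝ) → ℝ)
    (Gφ : (Fin n → ℝ) → (Fin n → ℝ))
    (Hφ : (Fin n → ℝ) → Matrix (Fin n) (Fin n) ℝ)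
    (hgradφ : ∀ x ∈ D, HasFDerivAt φ (gradCLM (Gφ x)) x)
    (hhessφ : ∀ x ∈ D, HasFDerivAt Gφ (matCLM (Hφ x)) x)
    (hinv : ∀ x ∈ D, IsUnit (Hφ x).det)
    (DH : (Fin n → ℝ) → (Fin n → ℝ) →L[ℝ] Matrix (Fin n) (Fin n) ℝ)
    (hDH : ∀ x ∈ D, HasFDerivAt Hφ (DH x) x)
    (a b : ℝ)
    (γ γ' γ'' : ℝ → (Fin n → ℝ))
    (hγD : ∀ t ∈ Set.Ioo a b, γ t ∈ D)
    (hγ' : ∀ t ∈ Set.Ioo a b, HasDerivAt γ (γ' t) t)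
    (hγ'' : ∀ t ∈ Set.Ioo a b, HasDerivAt γ' (γ'' t) t) :
    (∀ t ∈ Set.Ioo a b, ∀ j : Fin n,
        γ'' t j + ∑ k, ∑ l,
          (∑ m, (Hφ (γ t))⁻¹ j m * DH (γ t) (Pi.single l 1) m k) * γ' t k * γ' t l = 0)
      ↔ (∀ t ∈ Set.Ioo a b,
          HasDerivAt (fun s => (Hφ (γ s)).mulVec (γ' s)) 0 t) := by
  -- the actual derivative of the dual curve's velocity
  set d : ℝ → (Fin n → ℝ) :=
    fun t => DH (γ t) (γ' t) *ᵥ γ' t + Hφ (γ t) *ᵥ γ'' t with hd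
  have key : ∀ t ∈ Set.Ioo a b,
      HasDerivAt (fun s => (Hφ (γ s)).mulVec (γ' s)) (d t) t := by
    intro t ht
    have hHγ : HasDerivAt (fun s => Hφ (γ s)) (DH (γ t) (γ' t)) t :=
      (hDH (γ t) (hγD t ht)).comp_hasDerivAt t (hγ' t ht)
    have hcomp : ∀ j k : Fin n,
        HasDerivAt (fun s => Hφ (γ s) j k) (DH (γ t) (γ' t) j k) t := by
      intro j k
      have h1 := (hasDerivAt_pi.mp hHγ) j
      exact (hasDerivAt_pi.mp h1) k
    have hvk : ∀ k : Fin n, HasDerivAt (fun s => γ' s k) (γ'' t k) t :=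
      fun k => (hasDerivAt_pi.mp (hγ'' t ht)) k
    rw [hasDerivAt_pi]
    intro j
    have : HasDerivAt (fun s => ∑ k, Hφ (γ s) j k * γ' s k)
        (∑ k, (DH (γ t) (γ' t) j k * γ' t k + Hφ (γ t) j k * γ'' t k)) t :=
      HasDerivAt.fun_sum fun k _ => (hcomp j k).mul (hvk k)
    convert this using 1
    · rfl
    · rfl
    all_goals
      simp [hd, Matrix.mulVec, dotProduct, Finset.sum_add_distrib]
  -- algebraic identity: the geodesic vector is `H⁻¹ *ᵥ d`
  have alg : ∀ t ∈ Set.Ioo a b, ∀ j : Fin n,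
      γ'' t j + ∑ k, ∑ l,
          (∑ m, (Hφ (γ t))⁻¹ j m * DH (γ t) (Pi.single l 1) m k) * γ' t k * γ' t l
        = ((Hφ (γ t))⁻¹ *ᵥ d t) j := by
    intro t ht j
    have hsingle : γ' t = ∑ l, γ' t l • (Pi.single l 1 : Fin n → ℝ) := by
      funext i
      simp [Finset.sum_apply, Pi.single_apply]
    have hlin : DH (γ t) (γ' t) = ∑ l, γ' t l • DH (γ t) (Pi.single l 1) := by
      conv_lhs => rw [hsingle]
      simp [map_sum]
    have hmul : (Hφ (γ t))⁻¹ *ᵥ (Hφ (γ t) *ᵥ γ'' t) = γ'' t := by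
      rw [Matrix.mulVec_mulVec, Matrix.nonsing_inv_mul _ (hinv _ (hγD t ht)),
        Matrix.one_mulVec]
    simp only [hd, Matrix.mulVec_add, Pi.add_apply, hmul]
    rw [add_comm]
    congr 1
    have lhs_eq :
        ∑ k, ∑ l, (∑ m, (Hφ (γ t))⁻¹ j m * DH (γ t) (Pi.single l 1) m k)
            * γ' t k * γ' t l
          = ∑ m, ∑ k, ∑ l,
              (Hφ (γ t))⁻¹ j m * DH (γ t) (Pi.single l 1) m k * γ' t k * γ' t l := by
      calc ∑ k, ∑ l, (∑ m, (Hφ (γ t))⁻¹ j m * DH (γ t) (Pi.single l 1) m k)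
              * γ' t k * γ' t l
          = ∑ k, ∑ l, ∑ m,
              (Hφ (γ t))⁻¹ j m * DH (γ t) (Pi.single l 1) m k * γ' t k * γ' t l := by
            refine Finset.sum_congr rfl fun k _ => Finset.sum_congr rfl fun l _ => ?_
            rw [Finset.sum_mul, Finset.sum_mul]
        _ = ∑ k, ∑ m, ∑ l,
              (Hφ (γ t))⁻¹ j m * DH (γ t) (Pi.single l 1) m k * γ' t k * γ' t l :=
            Finset.sum_congr rfl fun k _ => Finset.sum_comm
        _ = ∑ m, ∑ k, ∑ l,
              (Hφ (γ t))⁻¹ j m * DH (γ t) (Pi.single l 1) m k * γ' t k * γ' t l :=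
            Finset.sum_comm
    rw [lhs_eq]
    simp only [Matrix.mulVec, dotProduct, hlin, Finset.sum_apply,
      Matrix.sum_apply, Matrix.smul_apply, Pi.smul_apply, smul_eq_mul,
      Finset.mul_sum, Finset.sum_mul]
    refine Finset.sum_congr rfl fun m _ => Finset.sum_congr rfl fun k _ =>
      Finset.sum_congr rfl fun l _ => ?_
    ring
  constructor
  · intro hg t ht
    have hz : d t = 0 := by
      have h2 : Hφ (γ t) *ᵥ ((Hφ (γ t))⁻¹ *ᵥ d t) = d t := by
        rw [Matrix.mulVec_mulVec, Matrix.mul_nonsing_inv _ (hinv _ (hγD t ht)),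
          Matrix.one_mulVec]
      rw [← h2]
      have : (Hφ (γ t))⁻¹ *ᵥ d t = 0 := by
        funext j
        rw [← alg t ht j]
        exact hg t ht j
      rw [this, Matrix.mulVec_zero]
    exact hz ▸ key t ht
  · intro h0 t ht j
    have hz : d t = 0 := ((h0 t ht).unique (key t ht)).symm
    rw [alg t ht j, hz, Matrix.mulVec_zero]
    rfl
end

section
/- Let D ⊆ ℝⁿ be open, φ : D → ℝ a C³ function whose Hessian matrix Φ(x) = (φ_{jk}(x)) is invertible for all x, with inverse (φ^{jk}(x)), and let α : D → Matₙ(ℂ) be a C¹ matrix-valued function with entries α_{jk}. Then for all j, l, q ∈ {1,…,n} and all x ∈ D: Σ_p φ^{pq} ∂/∂x^p ( Σ_k α_{jk} φ^{kl} ) − Σ_p φ^{pl} ∂/∂x^p ( Σ_k α_{jk} φ^{kq} ) = Σ_{k,p} ( ∂α_{jk}/∂x^p − ∂α_{jp}/∂x^k ) φ^{kl} φ^{pq}. (This identity, which uses the total symmetry of the third derivatives of φ, shows that the fiberwise Fourier–Legendre mirror transformation of differential forms commutes with the ∂̄-operator.) -/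
open Matrix Set

attribute [local instance] Matrix.normedAddCommGroup Matrix.normedSpace

/-- `matCLM` as a continuous linear map in the matrix argument. -/
noncomputable def matT {n : ℕ} :
    Matrix (Fin n) (Fin n) ℝ →L[ℝ] ((Fin n → ℝ) →L[ℝ] (Fin n → ℝ)) :=
  LinearMap.toContinuousLinearMap
    { toFun := matCLM
      map_add' := by intro A B; ext v i; simp [matCLM, Matrix.add_mulVec]
      map_smul' := by intro c A; ext v i; simp [matCLM, Matrix.smul_mulVec] }

/-- Complexification of a real matrix, as a continuous linear map. -/
noncomputable def mapC {n : ℕ} :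
    Matrix (Fin n) (Fin n) ℝ →L[ℝ] Matrix (Fin n) (Fin n) ℂ :=
  LinearMap.toContinuousLinearMap
    { toFun := fun A => A.map (fun r => (r : ℂ))
      map_add' := by intro A B; ext i j; simp
      map_smul' := by intro c A; ext i j; simp [Complex.real_smul] }

section
/-- The real module structure on complex matrices coming from their normed-space structure. -/
noncomputable abbrev mCmod {n : ℕ} : Module ℝ (Matrix (Fin n) (Fin n) ℂ) := NormedSpace.toModule

/-- The topology on complex matrices coming from their norm. -/
noncomputable abbrev mCtop {n : ℕ} : TopologicalSpace (Matrix (Fin n) (Fin n) ℂ) :=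
  @UniformSpace.toTopologicalSpace _ (@PseudoMetricSpace.toUniformSpace _
    (@SeminormedAddCommGroup.toPseudoMetricSpace _
      (@NormedAddCommGroup.toSeminormedAddCommGroup _ Matrix.normedAddCommGroup)))

attribute [local instance] mCmod mCtop

/-- Multiplication of complex matrices as a continuous bilinear map. -/
noncomputable def mulCLM {n : ℕ} :
    Matrix (Fin n) (Fin n) ℂ →L[ℝ] Matrix (Fin n) (Fin n) ℂ →L[ℝ] Matrix (Fin n) (Fin n) ℂ :=
  LinearMap.toContinuousLinearMap
    { toFun := fun A => LinearMap.toContinuousLinearMap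
        { toFun := fun B => A * B
          map_add' := fun B C => mul_add A B C
          map_smul' := fun c B => mul_smul_comm c A B }
      map_add' := by intro A B; ext C i j; simp [add_mul]
      map_smul' := by intro c A; ext B i j; simp [smul_mul_assoc] }

end

theorem mulCLM_apply {n : ℕ} (A B : Matrix (Fin n) (Fin n) ℂ) : mulCLM A B = A * B := rfl

/-- Product rule for matrix-valued functions. -/
theorem HasFDerivAt.matmul {n : ℕ} {f g : (Fin n → ℝ) → Matrix (Fin n) (Fin n) ℂ}
    {f' g' : (Fin n → ℝ) →L[ℝ] Matrix (Fin n) (Fin n) ℂ} {x : Fin n → ℝ}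
    (hf : HasFDerivAt f f' x) (hg : HasFDerivAt g g' x) :
    HasFDerivAt (fun y => f y * g y)
      ((mulCLM (f x)).comp g' + (mulCLM.comp f').flip (g x)) x := by
  have hc : HasFDerivAt (fun y => mulCLM (f y)) (mulCLM.comp f') x :=
    (mulCLM.hasFDerivAt).comp x hf
  exact hc.clm_apply hg

theorem mapC_mul {n : ℕ} (M N : Matrix (Fin n) (Fin n) ℝ) :
    (M * N).map (fun r => (r : ℂ)) = M.map (fun r => (r : ℂ)) * N.map (fun r => (r : ℂ)) :=
  Matrix.map_mul (f := Complex.ofRealHom)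

theorem mapC_one {n : ℕ} :
    (1 : Matrix (Fin n) (Fin n) ℝ).map (fun r => (r : ℂ)) = 1 :=
  Matrix.map_one _ Complex.ofReal_zero Complex.ofReal_one

theorem sum4_swap {M : Type*} [AddCommMonoid M] {n : ℕ}
    (f : Fin n → Fin n → Fin n → Fin n → M) :
    ∑ p, ∑ b, ∑ m, ∑ c, f p b m c = ∑ p, ∑ b, ∑ m, ∑ c, f c b m p := by
  calc ∑ p, ∑ b, ∑ m, ∑ c, f p b m c
      = ∑ p, ∑ b, ∑ c, ∑ m, f p b m c :=
        Finset.sum_congr rfl fun p _ => Finset.sum_congr rfl fun b _ => Finset.sum_comm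
    _ = ∑ p, ∑ c, ∑ b, ∑ m, f p b m c :=
        Finset.sum_congr rfl fun p _ => Finset.sum_comm
    _ = ∑ c, ∑ p, ∑ b, ∑ m, f p b m c := Finset.sum_comm
    _ = ∑ p, ∑ b, ∑ c, ∑ m, f c b m p :=
        Finset.sum_congr rfl fun p _ => Finset.sum_comm
    _ = ∑ p, ∑ b, ∑ m, ∑ c, f c b m p :=
        Finset.sum_congr rfl fun p _ => Finset.sum_congr rfl fun b _ => Finset.sum_comm

theorem firstpart {n : ℕ} (A : Matrix (Fin n) (Fin n) ℂ)
    (Dv : Fin n → Matrix (Fin n) (Fin n) ℂ) (j l q : Fin n) :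
    (∑ p, A p q * (Dv p * A) j l) - ∑ p, A p l * (Dv p * A) j q
      = ∑ k, ∑ p, (Dv p j k - Dv k j p) * A k l * A p q := by
  have h1 : (∑ p, A p q * (Dv p * A) j l) = ∑ k, ∑ p, Dv p j k * A k l * A p q := by
    simp only [Matrix.mul_apply, Finset.mul_sum]
    rw [Finset.sum_comm]
    exact Finset.sum_congr rfl fun k _ => Finset.sum_congr rfl fun p _ => by ring
  have h2 : (∑ p, A p l * (Dv p * A) j q) = ∑ k, ∑ p, Dv k j p * A k l * A p q := by
    simp only [Matrix.mul_apply, Finset.mul_sum]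
    exact Finset.sum_congr rfl fun p _ => Finset.sum_congr rfl fun k _ => by ring
  rw [h1, h2, ← Finset.sum_sub_distrib]
  exact Finset.sum_congr rfl fun k _ => by
    rw [← Finset.sum_sub_distrib]
    exact Finset.sum_congr rfl fun p _ => by ring

theorem cancelpart {n : ℕ} (A M : Matrix (Fin n) (Fin n) ℂ)
    (T : Fin n → Matrix (Fin n) (Fin n) ℂ)
    (hT : ∀ p m c, T p m c = T c m p) (j l q : Fin n) :
    ∑ p, A p q * (M * (A * (T p * A))) j l = ∑ p, A p l * (M * (A * (T p * A))) j q := by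
  have flat : ∀ l q : Fin n, ∑ p, A p q * (M * (A * (T p * A))) j l
      = ∑ p, ∑ b, ∑ m, ∑ c, M j b * A b m * T p m c * A p q * A c l := by
    intro l q
    simp only [Matrix.mul_apply, Finset.mul_sum]
    exact Finset.sum_congr rfl fun p _ => Finset.sum_congr rfl fun b _ =>
      Finset.sum_congr rfl fun m _ => Finset.sum_congr rfl fun c _ => by ring
  rw [flat l q, flat q l]
  refine Eq.trans
    (sum4_swap (fun p b m c => M j b * A b m * T p m c * A p q * A c l)) ?_
  exact Finset.sum_congr rfl fun p _ => Finset.sum_congr rfl fun b _ =>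
    Finset.sum_congr rfl fun m _ => Finset.sum_congr rfl fun c _ => by
      rw [hT c m p]; ring

/-- Let `D ⊆ ℝⁿ` be open and `φ : D → ℝ` a C³ function (gradient `Gφ`,
invertible Hessian `Hφ = (φ_{jk})` with inverse `(φ^{jk}) = (Hφ x)⁻¹`, third derivatives
recorded by `DH`, the Fréchet derivative of `Hφ`), and let `α : D → Matₙ(ℂ)` be a C¹
matrix-valued function with Fréchet derivative `Dα` (so `∂α_{jk}/∂x^p = Dα x (single p 1) j k`).
Let `DP` be the Fréchet derivative of the product `P = α · Φ⁻¹` (whose entries are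
`Σ_k α_{jk} φ^{kl}`).  Then for all `j, l, q` and `x ∈ D`:
`Σ_p φ^{pq} ∂_p (Σ_k α_{jk} φ^{kl}) − Σ_p φ^{pl} ∂_p (Σ_k α_{jk} φ^{kq})
  = Σ_{k,p} (∂α_{jk}/∂x^p − ∂α_{jp}/∂x^k) φ^{kl} φ^{pq}`.
(This identity, using the total symmetry of the third derivatives of `φ`, shows that the
fiberwise Fourier–Legendre mirror transformation of forms commutes with `∂̄`.) -/
theorem mirror_transform_commutes_with_dbar_identity {n : ℕ}
    (D : Set (Fin n → ℝ)) (hD : IsOpen D)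
    (φ : (Fin n → ℝ) → ℝ)
    (Gφ : (Fin n → ℝ) → (Fin n → ℝ))
    (Hφ : (Fin n → ℝ) → Matrix (Fin n) (Fin n) ℝ)
    (hgradφ : ∀ x ∈ D, HasFDerivAt φ (gradCLM (Gφ x)) x)
    (hhessφ : ∀ x ∈ D, HasFDerivAt Gφ (matCLM (Hφ x)) x)
    (hinv : ∀ x ∈ D, IsUnit (Hφ x).det)
    (DH : (Fin n → ℝ) → (Fin n → ℝ) →L[ℝ] Matrix (Fin n) (Fin n) ℝ)
    (hDH : ∀ x ∈ D, HasFDerivAt Hφ (DH x) x)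
    (α : (Fin n → ℝ) → Matrix (Fin n) (Fin n) ℂ)
    (Dα : (Fin n → ℝ) → (Fin n → ℝ) →L[ℝ] Matrix (Fin n) (Fin n) ℂ)
    (hα : ∀ x ∈ D, HasFDerivAt α (Dα x) x)
    (DP : (Fin n → ℝ) → (Fin n → ℝ) →L[ℝ] Matrix (Fin n) (Fin n) ℂ)
    (hDP : ∀ x ∈ D,
      HasFDerivAt (fun y => α y * ((Hφ y)⁻¹).map (fun r => (r : ℂ))) (DP x) x) :
    ∀ x ∈ D, ∀ j l q : Fin n,
      (∑ p, ((((Hφ x)⁻¹ p q : ℝ)) : ℂ) * DP x (Pi.single p 1) j l)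
        - (∑ p, ((((Hφ x)⁻¹ p l : ℝ)) : ℂ) * DP x (Pi.single p 1) j q)
      = ∑ k, ∑ p,
          (Dα x (Pi.single p 1) j k - Dα x (Pi.single k 1) j p)
            * ((((Hφ x)⁻¹ k l : ℝ)) : ℂ) * ((((Hφ x)⁻¹ p q : ℝ)) : ℂ) := by
  intro x hx j l q
  have hxD : D ∈ nhds x := hD.mem_nhds hx
  -- symmetry of third derivatives
  have hsym : ∀ p b c : Fin n,
      DH x (Pi.single p 1) b c = DH x (Pi.single c 1) b p := by
    have hf : ∀ᶠ y in nhds x, HasFDerivAt Gφ (matCLM (Hφ y)) y :=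
      Filter.eventually_of_mem hxD fun y hy => hhessφ y hy
    have hx2 : HasFDerivAt (fun y => matCLM (Hφ y)) (matT.comp (DH x)) x :=
      (matT.hasFDerivAt).comp x (hDH x hx)
    have h := second_derivative_symmetric_of_eventually_of_real hf hx2
    intro p b c
    have h2 := congrFun (h (Pi.single p 1) (Pi.single c 1)) b
    simpa [matT, matCLM, Matrix.mulVec_single] using h2
  -- derivative of the product P = α · Φ⁻¹
  have key : ∀ v : Fin n → ℝ,
      DP x v = Dα x v * ((Hφ x)⁻¹).map (fun r => (r : ℂ))
        - α x * (((Hφ x)⁻¹).map (fun r => (r : ℂ)) *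
            ((DH x v).map (fun r => (r : ℂ)) * ((Hφ x)⁻¹).map (fun r => (r : ℂ)))) := by
    have hHC : HasFDerivAt (fun y => (Hφ y).map (fun r : ℝ => (r : ℂ)))
        (mapC.comp (DH x)) x := (mapC.hasFDerivAt).comp x (hDH x hx)
    have hprod := (hDP x hx).matmul hHC
    have heq : α =ᶠ[nhds x]
        (fun y => (α y * ((Hφ y)⁻¹).map (fun r => (r : ℂ))) *
          (Hφ y).map (fun r : ℝ => (r : ℂ))) := by
      filter_upwards [hxD] with y hy
      rw [mul_assoc, ← mapC_mul, Matrix.nonsing_inv_mul _ (hinv y hy), mapC_one, mul_one]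
    have hα2 : HasFDerivAt α
        ((mulCLM ((fun y => α y * ((Hφ y)⁻¹).map (fun r => (r : ℂ))) x)).comp
            (mapC.comp (DH x))
          + (mulCLM.comp (DP x)).flip
              ((fun y => (Hφ y).map (fun r : ℝ => (r : ℂ))) x)) x :=
      hprod.congr_of_eventuallyEq heq
    have hL := (hα x hx).unique hα2
    intro v
    have e1 : Dα x v = (α x * ((Hφ x)⁻¹).map (fun r => (r : ℂ)))
        * (DH x v).map (fun r => (r : ℂ))
        + DP x v * (Hφ x).map (fun r => (r : ℂ)) := by
      rw [hL]; rfl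
    have e2 := sub_eq_of_eq_add' e1
    calc DP x v
        = DP x v * ((Hφ x).map (fun r => (r : ℂ)) * ((Hφ x)⁻¹).map (fun r => (r : ℂ))) := by
          rw [← mapC_mul, Matrix.mul_nonsing_inv _ (hinv x hx), mapC_one, mul_one]
      _ = (DP x v * (Hφ x).map (fun r => (r : ℂ))) * ((Hφ x)⁻¹).map (fun r => (r : ℂ)) := by
          rw [mul_assoc]
      _ = (Dα x v - (α x * ((Hφ x)⁻¹).map (fun r => (r : ℂ)))
            * (DH x v).map (fun r => (r : ℂ))) * ((Hφ x)⁻¹).map (fun r => (r : ℂ)) := by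
          rw [e2]
      _ = _ := by simp only [sub_mul, mul_assoc]
  -- assemble
  have ha : ∀ a b : Fin n, (((Hφ x)⁻¹ a b : ℝ) : ℂ)
      = ((Hφ x)⁻¹).map (fun r => (r : ℂ)) a b := fun _ _ => rfl
  simp only [ha, key, Matrix.sub_apply, mul_sub, Finset.sum_sub_distrib]
  have h2 := cancelpart (((Hφ x)⁻¹).map (fun r => (r : ℂ))) (α x)
      (fun p => (DH x (Pi.single p 1)).map (fun r => (r : ℂ)))
      (fun p m c => congrArg (fun r : ℝ => (r : ℂ)) (hsym p m c)) j l q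
  have h1 := firstpart (((Hφ x)⁻¹).map (fun r => (r : ℂ)))
      (fun p => Dα x (Pi.single p 1)) j l q
  linear_combination h1 - h2
end

section
/- Let D ⊆ ℝⁿ be open and connected, f : D → ℝⁿ a C² map, and g : D → Matₙ(ℝ) a C¹ matrix-valued map. Define the fiberwise-linear map F : {x + iy ∈ ℂⁿ : x ∈ D, y ∈ ℝⁿ} → ℂⁿ by F(x + iy) = f(x) + i·g(x)y. Then F is holomorphic (complex differentiable at every point) if and only if g(x) = Df(x) for all x ∈ D and Df is constant on D, i.e., if and only if f is the restriction of an affine map and F = f_B for this affine map f. -/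
open Matrix Set

attribute [local instance] Matrix.normedAddCommGroup Matrix.normedSpace

@[simp] lemma matCLM_apply {n : ℕ} (A : Matrix (Fin n) (Fin n) ℝ) (u : Fin n → ℝ) :
    matCLM A u = A.mulVec u := rfl

noncomputable def matCLMc {n : ℕ} (A : Matrix (Fin n) (Fin n) ℂ) :
    (Fin n → ℂ) →L[ℂ] (Fin n → ℂ) :=
  LinearMap.toContinuousLinearMap A.mulVecLin

@[simp] lemma matCLMc_apply {n : ℕ} (A : Matrix (Fin n) (Fin n) ℂ) (u : Fin n → ℂ) :
    matCLMc A u = A.mulVec u := rfl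

noncomputable def reCLM (n : ℕ) : (Fin n → ℂ) →L[ℝ] (Fin n → ℝ) :=
  LinearMap.toContinuousLinearMap
    { toFun := fun z k => (z k).re
      map_add' := by intros; funext; simp
      map_smul' := by intros; funext; simp [Complex.smul_re] }

@[simp] lemma reCLM_apply {n : ℕ} (z : Fin n → ℂ) (k : Fin n) : reCLM n z k = (z k).re := rfl

noncomputable def imCLM (n : ℕ) : (Fin n → ℂ) →L[ℝ] (Fin n → ℝ) :=
  LinearMap.toContinuousLinearMap
    { toFun := fun z k => (z k).im
      map_add' := by intros; funext; simp
      map_smul' := by intros; funext; simp [Complex.smul_im] }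

@[simp] lemma imCLM_apply {n : ℕ} (z : Fin n → ℂ) (k : Fin n) : imCLM n z k = (z k).im := rfl

noncomputable def psiCLM (n : ℕ) : ((Fin n → ℝ) × (Fin n → ℝ)) →L[ℝ] (Fin n → ℂ) :=
  LinearMap.toContinuousLinearMap
    { toFun := fun p j => (p.1 j : ℂ) + Complex.I * (p.2 j : ℂ)
      map_add' := by intros; funext; push_cast; simp; ring
      map_smul' := by intros; funext; simp [Complex.real_smul]; ring }

@[simp] lemma psiCLM_apply {n : ℕ} (p : (Fin n → ℝ) × (Fin n → ℝ)) (j : Fin n) :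
    psiCLM n p j = (p.1 j : ℂ) + Complex.I * (p.2 j : ℂ) := rfl

noncomputable def matCLML (n : ℕ) :
    Matrix (Fin n) (Fin n) ℝ →L[ℝ] ((Fin n → ℝ) →L[ℝ] (Fin n → ℝ)) :=
  LinearMap.toContinuousLinearMap
    { toFun := matCLM
      map_add' := by
        intro A B; apply ContinuousLinearMap.ext; intro u
        simp [Matrix.add_mulVec]
      map_smul' := by
        intro c A; apply ContinuousLinearMap.ext; intro u
        simp [Matrix.smul_mulVec] }

@[simp] lemma matCLML_apply {n : ℕ} (A : Matrix (Fin n) (Fin n) ℝ) :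
    matCLML n A = matCLM A := rfl

/-- A function with zero derivative on an open preconnected set is constant there. -/
lemma const_of_hasFDerivAt_zero {E F : Type*} [NormedAddCommGroup E] [NormedSpace ℝ E]
    [NormedAddCommGroup F] [NormedSpace ℝ F]
    {D : Set E} (hD : IsOpen D) (hconn : IsPreconnected D) {g : E → F}
    (h : ∀ x ∈ D, HasFDerivAt g (0 : E →L[ℝ] F) x)
    {a b : E} (ha : a ∈ D) (hb : b ∈ D) : g a = g b := by
  haveI : PreconnectedSpace D := Subtype.preconnectedSpace hconn
  have hlc : IsLocallyConstant (fun x : D => g x) := by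
    rw [IsLocallyConstant.iff_exists_open]
    rintro ⟨x, hx⟩
    obtain ⟨ε, hε, hball⟩ := Metric.isOpen_iff.1 hD x hx
    refine ⟨Subtype.val ⁻¹' Metric.ball x ε,
      Metric.isOpen_ball.preimage continuous_subtype_val, by simpa using hε, ?_⟩
    rintro ⟨y, hy⟩ hyb
    have hxball : x ∈ Metric.ball x ε := Metric.mem_ball_self hε
    exact (convex_ball x ε).is_const_of_fderivWithin_eq_zero
      (fun w hw => (h w (hball hw)).differentiableAt.differentiableWithinAt)
      (fun w hw => by
        rw [fderivWithin_of_isOpen Metric.isOpen_ball hw, (h w (hball hw)).fderiv])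
      hyb hxball
  exact hlc.apply_eq_of_preconnectedSpace ⟨a, ha⟩ ⟨b, hb⟩

/-- Let `D ⊆ ℝⁿ` be open and connected, `f : D → ℝⁿ` a C² map (with
Jacobian `Df`), and `g : D → Matₙ(ℝ)` a C¹ matrix-valued map (with derivative `Dg`).
Define the fiberwise-linear map `F (x + iy) = f x + i · (g x) y` on the tube over `D`.
Then `F` is holomorphic (complex differentiable at every point of the tube) iff
`g x = Df x` for all `x ∈ D` and `Df` is constant on `D`, i.e. iff `f` is the restriction
of an affine map and `F = f_B` for this affine map. -/
theorem fiberwise_linear_holomorphic_iff_affine_lift {n : ℕ}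
    (D : Set (Fin n → ℝ)) (hD : IsOpen D) (hconn : IsConnected D)
    (f : (Fin n → ℝ) → (Fin n → ℝ))
    (Df : (Fin n → ℝ) → Matrix (Fin n) (Fin n) ℝ)
    (hfC2 : ContDiffOn ℝ 2 f D)
    (hf : ∀ x ∈ D, HasFDerivAt f (matCLM (Df x)) x)
    (g : (Fin n → ℝ) → Matrix (Fin n) (Fin n) ℝ)
    (Dg : (Fin n → ℝ) → (Fin n → ℝ) →L[ℝ] Matrix (Fin n) (Fin n) ℝ)
    (hgC1 : ContDiffOn ℝ 1 g D)
    (hg : ∀ x ∈ D, HasFDerivAt g (Dg x) x)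
    (F : (Fin n → ℂ) → (Fin n → ℂ))
    (hF : ∀ z : Fin n → ℂ, F z = fun j =>
      ((f (fun k => (z k).re) j : ℝ) : ℂ)
        + Complex.I * (((g (fun k => (z k).re)).mulVec (fun k => (z k).im) j : ℝ) : ℂ)) :
    (∀ z : Fin n → ℂ, (fun k => (z k).re) ∈ D → DifferentiableAt ℂ F z)
      ↔ ((∀ x ∈ D, g x = Df x) ∧
          ∃ A : Matrix (Fin n) (Fin n) ℝ, ∀ x ∈ D, Df x = A) := by
  constructor
  · intro hHol
    have key : ∀ z : Fin n → ℂ, (fun k => (z k).re) ∈ D →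
        ∀ (e : Fin n → ℝ) (j : Fin n),
          ((Dg (fun k => (z k).re)) e).mulVec (fun k => (z k).im) j = 0 ∧
          (g (fun k => (z k).re)).mulVec e j
            = (Df (fun k => (z k).re)).mulVec e j := by
      intro z hz e j
      set x : Fin n → ℝ := fun k => (z k).re with hxdef
      set y : Fin n → ℝ := fun k => (z k).im with hydef
      have h1 : HasFDerivAt (fun w : Fin n → ℂ => f (reCLM n w))
          ((matCLM (Df x)).comp (reCLM n)) z :=
        (hf x hz).comp z (reCLM n).hasFDerivAt
      have hg1 : HasFDerivAt (fun w : Fin n → ℂ => g (reCLM n w))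
          ((Dg x).comp (reCLM n)) z :=
        (hg x hz).comp z (reCLM n).hasFDerivAt
      have h2 : HasFDerivAt (fun w : Fin n → ℂ => matCLM (g (reCLM n w)))
          ((matCLML n).comp ((Dg x).comp (reCLM n))) z :=
        (matCLML n).hasFDerivAt.comp z hg1
      have h3 := h2.clm_apply (imCLM n).hasFDerivAt
      have h5 := (psiCLM n).hasFDerivAt.comp z (HasFDerivAt.prodMk h1 h3)
      have hFeq : F = (⇑(psiCLM n) ∘ fun w =>
          (f (reCLM n w), (matCLM (g (reCLM n w))) (imCLM n w))) := by
        funext w; rw [hF w]; rfl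
      rw [← hFeq] at h5
      have hC : HasFDerivAt F ((fderiv ℂ F z).restrictScalars ℝ) z :=
        ((hHol z hz).hasFDerivAt).restrictScalars ℝ
      have hU := hC.unique h5
      have hCR' : (fderiv ℂ F z).restrictScalars ℝ (Complex.I • (fun k => (e k : ℂ)))
          = Complex.I • ((fderiv ℂ F z).restrictScalars ℝ (fun k => (e k : ℂ))) := by
        simp only [ContinuousLinearMap.coe_restrictScalars']
        exact (fderiv ℂ F z).map_smul Complex.I _
      rw [hU] at hCR'
      have hCR := congrFun hCR' j
      rw [Complex.ext_iff] at hCR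
      have hre1 : reCLM n (fun k => (e k : ℂ)) = e := by funext k; simp
      have him1 : imCLM n (fun k => (e k : ℂ)) = 0 := by funext k; simp
      have hre2 : reCLM n (Complex.I • fun k => (e k : ℂ)) = 0 := by
        funext k; simp [Complex.mul_re]
      have him2 : imCLM n (Complex.I • fun k => (e k : ℂ)) = e := by
        funext k; simp [Complex.mul_im]
      have hrez : reCLM n z = x := rfl
      have himz : imCLM n z = y := rfl
      simp [hre1, him1, hre2, him2, hrez, himz, Complex.mul_re, Complex.mul_im,
        Matrix.mulVec_zero, map_zero] at hCR
      exact hCR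
    obtain ⟨x₀, hx₀⟩ := hconn.nonempty
    have hgDf : ∀ x ∈ D, g x = Df x := by
      intro x hx
      have hmem : (fun k => (((fun k => (x k : ℂ)) k).re : ℝ)) ∈ D := by
        simpa using hx
      ext j i
      have h := (key (fun k => (x k : ℂ)) (by simpa using hx) (Pi.single i 1) j).2
      simpa [Matrix.mulVec_single] using h
    have hDg0 : ∀ x ∈ D, Dg x = 0 := by
      intro x hx
      apply ContinuousLinearMap.ext; intro e
      ext j i
      have h := (key (fun k => (x k : ℂ) + (Pi.single i 1 : Fin n → ℝ) k * Complex.I)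
        (by simpa using hx) e j).1
      simpa [Matrix.mulVec_single] using h
    refine ⟨hgDf, Df x₀, ?_⟩
    intro x hx
    rw [← hgDf x hx, ← hgDf x₀ hx₀]
    exact const_of_hasFDerivAt_zero hD hconn.isPreconnected
      (fun w hw => by have h := hg w hw; rw [hDg0 w hw] at h; exact h) hx hx₀
  · rintro ⟨hgDf, A, hA⟩ z hz
    set x : Fin n → ℝ := fun k => (z k).re with hxdef
    obtain ⟨ε, hε, hball⟩ := Metric.isOpen_iff.1 hD x hz
    have hconst : ∀ x' ∈ Metric.ball x ε,
        f x' - A.mulVec x' = f x - A.mulVec x := by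
      intro x' hx'
      refine (convex_ball x ε).is_const_of_fderivWithin_eq_zero (𝕜 := ℝ)
        (f := fun w => f w - A.mulVec w) ?_ ?_ hx' (Metric.mem_ball_self hε)
      · intro w hw
        exact ((hf w (hball hw)).sub (matCLM A).hasFDerivAt).differentiableAt.differentiableWithinAt
      · intro w hw
        rw [fderivWithin_of_isOpen Metric.isOpen_ball hw]
        have hder : HasFDerivAt (fun w => f w - A.mulVec w)
            (matCLM (Df w) - matCLM A) w :=
          (hf w (hball hw)).sub (matCLM A).hasFDerivAt
        rw [hder.fderiv, hA w (hball hw)]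
        exact sub_self _
    set Ac : Matrix (Fin n) (Fin n) ℂ := A.map (fun r => (r : ℂ)) with hAcdef
    have hGdiff : DifferentiableAt ℂ
        (fun w : Fin n → ℂ => (fun j => ((f x - A.mulVec x) j : ℂ)) + matCLMc Ac w) z :=
      (differentiableAt_const _).add (matCLMc Ac).differentiableAt
    apply hGdiff.congr_of_eventuallyEq
    have hnhds : {w : Fin n → ℂ | (fun k => (w k).re) ∈ Metric.ball x ε} ∈ nhds z := by
      have hcont : Continuous (fun w : Fin n → ℂ => fun k => (w k).re) :=
        continuous_pi fun k => Complex.continuous_re.comp (continuous_apply k)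
      exact (Metric.isOpen_ball.preimage hcont).mem_nhds (Metric.mem_ball_self hε)
    filter_upwards [hnhds] with w hw
    set x' : Fin n → ℝ := fun k => (w k).re with hx'def
    set y' : Fin n → ℝ := fun k => (w k).im with hy'def
    have hx'D : x' ∈ D := hball hw
    have hgx' : g x' = A := by rw [hgDf x' hx'D, hA x' hx'D]
    have hfx' : f x' = f x - A.mulVec x + A.mulVec x' := by
      have h := hconst x' hw
      rw [sub_eq_iff_eq_add] at h
      exact h
    have hmv : ∀ j, (Ac.mulVec w) j
        = ((A.mulVec x' j : ℝ) : ℂ) + Complex.I * ((A.mulVec y' j : ℝ) : ℂ) := by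
      intro j
      have hwk : ∀ k, w k = (x' k : ℂ) + (y' k : ℂ) * Complex.I :=
        fun k => (Complex.re_add_im (w k)).symm
      simp only [Matrix.mulVec, dotProduct, Matrix.map_apply, hAcdef]
      push_cast
      calc (Finset.univ.sum fun k => (A j k : ℂ) * w k)
          = Finset.univ.sum fun k =>
            ((A j k : ℂ) * (x' k : ℂ) + Complex.I * ((A j k : ℂ) * (y' k : ℂ))) :=
            Finset.sum_congr rfl (fun k _ => by rw [hwk k]; ring)
        _ = (Finset.univ.sum fun k => (A j k : ℂ) * (x' k : ℂ))
            + Complex.I * Finset.univ.sum fun k => (A j k : ℂ) * (y' k : ℂ) := by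
            rw [Finset.sum_add_distrib, Finset.mul_sum]
    rw [hF w, ← hx'def, ← hy'def]
    funext j
    simp only [Pi.add_apply, matCLMc_apply, hmv j, hgx', hfx']
    push_cast
    ring
end

section
/- Let n ≥ 1, let Λ(ℂ^{2n}) be the exterior algebra of ℂ^{2n} with standard basis e_1,…,e_n,f_1,…,f_n, let Φ = (Φ_{jk}) be a symmetric n×n complex matrix, and set ω_Φ = Σ_{j,k} Φ_{jk} e_j ∧ f_k ∈ Λ²(ℂ^{2n}). Let L_A : Λ(ℂ^{2n}) → Λ(ℂ^{2n}) be exterior multiplication by ω_Φ, and let L_B = Σ_j ε(f_j)∘ι(e_j*) and Λ_B = Σ_j ε(e_j)∘ι(f_j*) as operators on Λ(ℂ^{2n}) (ε denoting left exterior multiplication and ι contraction with the dual basis covectors). Then L_A∘L_B = L_B∘L_A and L_A∘Λ_B = Λ_B∘L_A. Consequently the hard Lefschetz sl₂ action generated by L_A and the variation-of-Hodge-structures sl₂ action generated by L_B commute, giving an sl₂ × sl₂ action. -/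
/-! Model of the exterior algebra `Λ(ℂ^{2n})`: we take `ℂ^{2n} = (Fin n ⊕ Fin n) → ℂ`,
with standard basis vectors `e j = Pi.single (inl j) 1` and `f j = Pi.single (inr j) 1`.
`eps v` is left exterior multiplication by `v` and `contr d` is interior multiplication
(contraction) with the covector `d` (via `CliffordAlgebra.contractLeft`, the exterior
algebra being the Clifford algebra of the zero quadratic form). -/

/-- `ℂ^{2n}` with its standard basis split into two groups of `n` vectors. -/
abbrev Vn (n : ℕ) := (Fin n ⊕ Fin n) → ℂ

/-- Left exterior multiplication `ε(v)` on `Λ(ℂ^{2n})`. -/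
noncomputable def eps {n : ℕ} (v : Vn n) :
    ExteriorAlgebra ℂ (Vn n) →ₗ[ℂ] ExteriorAlgebra ℂ (Vn n) :=
  LinearMap.mulLeft ℂ (ExteriorAlgebra.ι ℂ v)

/-- Interior multiplication (contraction) `ι(d)` with a covector `d` on `Λ(ℂ^{2n})`. -/
noncomputable def contr {n : ℕ} (d : Module.Dual ℂ (Vn n)) :
    ExteriorAlgebra ℂ (Vn n) →ₗ[ℂ] ExteriorAlgebra ℂ (Vn n) :=
  CliffordAlgebra.contractLeft d

/-- The basis vector `e_j`. -/
noncomputable def eVec (n : ℕ) (j : Fin n) : Vn n := Pi.single (Sum.inl j) 1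
/-- The basis vector `f_j`. -/
noncomputable def fVec (n : ℕ) (j : Fin n) : Vn n := Pi.single (Sum.inr j) 1
/-- The dual basis covector `e_j*`. -/
noncomputable def eCoord (n : ℕ) (j : Fin n) : Module.Dual ℂ (Vn n) :=
  LinearMap.proj (Sum.inl j)
/-- The dual basis covector `f_j*`. -/
noncomputable def fCoord (n : ℕ) (j : Fin n) : Module.Dual ℂ (Vn n) :=
  LinearMap.proj (Sum.inr j)

/-- The variation-of-Hodge-structures operator `L_B = Σ_j ε(f_j) ∘ ι(e_j*)`. -/
noncomputable def LB (n : ℕ) : ExteriorAlgebra ℂ (Vn n) →ₗ[ℂ] ExteriorAlgebra ℂ (Vn n) :=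
  ∑ j, (eps (fVec n j)) ∘ₗ (contr (eCoord n j))

/-- Its adjoint `Λ_B = Σ_j ε(e_j) ∘ ι(f_j*)`. -/
noncomputable def LamB (n : ℕ) : ExteriorAlgebra ℂ (Vn n) →ₗ[ℂ] ExteriorAlgebra ℂ (Vn n) :=
  ∑ j, (eps (eVec n j)) ∘ₗ (contr (fCoord n j))

/-- The Kähler-type two-form `ω_Φ = Σ_{j,k} Φ_{jk} e_j ∧ f_k` attached to a symmetric
matrix `Φ`. -/
noncomputable def omegaPhi {n : ℕ} (Φ : Matrix (Fin n) (Fin n) ℂ) :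
    ExteriorAlgebra ℂ (Vn n) :=
  ∑ j, ∑ k, Φ j k • (ExteriorAlgebra.ι ℂ (eVec n j) * ExteriorAlgebra.ι ℂ (fVec n k))

/-- The hard Lefschetz operator `L_A`: exterior multiplication by `ω_Φ`. -/
noncomputable def LA {n : ℕ} (Φ : Matrix (Fin n) (Fin n) ℂ) :
    ExteriorAlgebra ℂ (Vn n) →ₗ[ℂ] ExteriorAlgebra ℂ (Vn n) :=
  LinearMap.mulLeft ℂ (omegaPhi Φ)


/-! ### Auxiliary lemmas -/

open ExteriorAlgebra in
lemma swap_iota {n : ℕ} (a b : Vn n) :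
    ι ℂ a * ι ℂ b = -(ι ℂ b * ι ℂ a) :=
  eq_neg_of_add_eq_zero_left (ι_add_mul_swap a b)

open ExteriorAlgebra in
lemma triple_iota {n : ℕ} (u v w : Vn n) (z : ExteriorAlgebra ℂ (Vn n)) :
    ι ℂ u * (ι ℂ v * (ι ℂ w * z)) = ι ℂ v * (ι ℂ w * (ι ℂ u * z)) := by
  calc ι ℂ u * (ι ℂ v * (ι ℂ w * z)) = (ι ℂ u * ι ℂ v) * (ι ℂ w * z) := by
        rw [mul_assoc]
    _ = -(ι ℂ v * (ι ℂ u * (ι ℂ w * z))) := by rw [swap_iota u v, neg_mul, mul_assoc]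
    _ = -(ι ℂ v * ((ι ℂ u * ι ℂ w) * z)) := by rw [mul_assoc]
    _ = ι ℂ v * (ι ℂ w * (ι ℂ u * z)) := by
        rw [swap_iota u w, neg_mul, mul_neg, neg_neg, mul_assoc]

open ExteriorAlgebra in
lemma contr_two_mul {n : ℕ} (d : Module.Dual ℂ (Vn n)) (v w : Vn n)
    (x : ExteriorAlgebra ℂ (Vn n)) :
    contr d (ι ℂ v * (ι ℂ w * x)) =
      d v • (ι ℂ w * x) - d w • (ι ℂ v * x) + ι ℂ v * (ι ℂ w * contr d x) := by
  unfold contr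
  rw [CliffordAlgebra.contractLeft_ι_mul, CliffordAlgebra.contractLeft_ι_mul,
    mul_sub, mul_smul_comm]
  abel

open ExteriorAlgebra in
lemma comm_term {n : ℕ} (u v w : Vn n) (d : Module.Dual ℂ (Vn n))
    (x : ExteriorAlgebra ℂ (Vn n)) :
    ι ℂ u * contr d (ι ℂ v * (ι ℂ w * x)) =
      ι ℂ v * (ι ℂ w * (ι ℂ u * contr d x)) +
        (d v • (ι ℂ u * (ι ℂ w * x)) - d w • (ι ℂ u * (ι ℂ v * x))) := by
  rw [contr_two_mul, mul_add, mul_sub, mul_smul_comm, mul_smul_comm, triple_iota u v w]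
  abel

open ExteriorAlgebra in
lemma sum_wedge_zero {n : ℕ} (c : Fin n → Fin n → ℂ) (hc : ∀ j k, c j k = c k j)
    (g : Fin n → Vn n) (x : ExteriorAlgebra ℂ (Vn n)) :
    ∑ j, ∑ k, c j k • (ι ℂ (g j) * (ι ℂ (g k) * x)) = 0 := by
  set S := ∑ j, ∑ k, c j k • (ι ℂ (g j) * (ι ℂ (g k) * x)) with hS
  have h2 : S + S = 0 := by
    nth_rewrite 2 [hS]
    rw [Finset.sum_comm]
    rw [hS, ← Finset.sum_add_distrib]
    refine Finset.sum_eq_zero fun j _ => ?_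
    rw [← Finset.sum_add_distrib]
    refine Finset.sum_eq_zero fun k _ => ?_
    rw [hc k j, ← smul_add, ← mul_assoc, ← mul_assoc, ← add_mul, ι_add_mul_swap,
      zero_mul, smul_zero]
  have h2' : (2 : ℂ) • S = 0 := by rw [two_smul]; exact h2
  rcases smul_eq_zero.mp h2' with h | h
  · norm_num at h
  · exact h

open ExteriorAlgebra in
lemma omegaPhi_mul {n : ℕ} (Φ : Matrix (Fin n) (Fin n) ℂ) (y : ExteriorAlgebra ℂ (Vn n)) :
    omegaPhi Φ * y =
      ∑ j', ∑ k', Φ j' k' • (ι ℂ (eVec n j') * (ι ℂ (fVec n k') * y)) := by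
  rw [omegaPhi, Finset.sum_mul]
  refine Finset.sum_congr rfl fun j' _ => ?_
  rw [Finset.sum_mul]
  exact Finset.sum_congr rfl fun k' _ => by rw [smul_mul_assoc, mul_assoc]

open ExteriorAlgebra in
lemma key_comm {n : ℕ} (Φ : Matrix (Fin n) (Fin n) ℂ) (u : Fin n → Vn n)
    (d : Fin n → Module.Dual ℂ (Vn n))
    (hz : ∀ x : ExteriorAlgebra ℂ (Vn n),
      ∑ j, ∑ j', ∑ k', Φ j' k' •
        ((d j (eVec n j')) • (ι ℂ (u j) * (ι ℂ (fVec n k') * x)) -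
         (d j (fVec n k')) • (ι ℂ (u j) * (ι ℂ (eVec n j') * x))) = 0) :
    LA Φ ∘ₗ (∑ j, eps (u j) ∘ₗ contr (d j)) = (∑ j, eps (u j) ∘ₗ contr (d j)) ∘ₗ LA Φ := by
  apply LinearMap.ext; intro x
  simp only [LinearMap.comp_apply, LinearMap.sum_apply, LA, LinearMap.mulLeft_apply, eps]
  simp only [omegaPhi_mul]
  -- expand the right hand side
  have rhs_eq : ∑ j, ι ℂ (u j) *
        (contr (d j) (∑ j', ∑ k', Φ j' k' • (ι ℂ (eVec n j') * (ι ℂ (fVec n k') * x)))) =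
      ∑ j, ∑ j', ∑ k', Φ j' k' •
        (ι ℂ (u j) * contr (d j) (ι ℂ (eVec n j') * (ι ℂ (fVec n k') * x))) := by
    refine Finset.sum_congr rfl fun j _ => ?_
    rw [map_sum, Finset.mul_sum]
    refine Finset.sum_congr rfl fun j' _ => ?_
    rw [map_sum, Finset.mul_sum]
    refine Finset.sum_congr rfl fun k' _ => ?_
    rw [LinearMap.map_smul, mul_smul_comm]
  rw [rhs_eq]
  simp only [comm_term, smul_add, Finset.sum_add_distrib, hz x, add_zero]
  -- expand the left hand side
  have lhs_eq : ∑ j', ∑ k', Φ j' k' •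
        (ι ℂ (eVec n j') * (ι ℂ (fVec n k') * (∑ j, ι ℂ (u j) * contr (d j) x))) =
      ∑ j', ∑ k', ∑ j, Φ j' k' •
        (ι ℂ (eVec n j') * (ι ℂ (fVec n k') * (ι ℂ (u j) * contr (d j) x))) := by
    refine Finset.sum_congr rfl fun j' _ => Finset.sum_congr rfl fun k' _ => ?_
    rw [Finset.mul_sum, Finset.mul_sum, Finset.smul_sum]
  rw [lhs_eq]
  calc ∑ j', ∑ k', ∑ j, Φ j' k' •
        (ι ℂ (eVec n j') * (ι ℂ (fVec n k') * (ι ℂ (u j) * contr (d j) x)))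
      = ∑ j', ∑ j, ∑ k', Φ j' k' •
        (ι ℂ (eVec n j') * (ι ℂ (fVec n k') * (ι ℂ (u j) * contr (d j) x))) :=
        Finset.sum_congr rfl fun j' _ => Finset.sum_comm
    _ = ∑ j, ∑ j', ∑ k', Φ j' k' •
        (ι ℂ (eVec n j') * (ι ℂ (fVec n k') * (ι ℂ (u j) * contr (d j) x))) :=
        Finset.sum_comm


/-- For `n ≥ 1` and a *symmetric* `n × n` complex matrix `Φ`, the hard
Lefschetz operator `L_A` (wedging with `ω_Φ = Σ Φ_{jk} e_j ∧ f_k`) commutes with both the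
variation-of-Hodge-structures operator `L_B = Σ ε(f_j) ι(e_j*)` and its adjoint
`Λ_B = Σ ε(e_j) ι(f_j*)`: `L_A ∘ L_B = L_B ∘ L_A` and `L_A ∘ Λ_B = Λ_B ∘ L_A`.
Consequently the hard Lefschetz `sl₂` action and the VHS `sl₂` action commute, giving an
`sl₂ × sl₂` action. -/
theorem hard_lefschetz_commutes_with_vhs (n : ℕ) (hn : 1 ≤ n)
    (Φ : Matrix (Fin n) (Fin n) ℂ) (hΦ : Φ.IsSymm) :
    LA Φ ∘ₗ LB n = LB n ∘ₗ LA Φ ∧ LA Φ ∘ₗ LamB n = LamB n ∘ₗ LA Φ := by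
  have hsymm : ∀ j k, Φ j k = Φ k j := fun j k => hΦ.apply k j
  constructor
  · have := key_comm Φ (fun j => fVec n j) (fun j => eCoord n j) ?_
    · simpa [LB] using this
    · intro x
      have step : ∀ j : Fin n,
          (∑ j', ∑ k', Φ j' k' •
            ((eCoord n j (eVec n j')) •
              (ExteriorAlgebra.ι ℂ (fVec n j) * (ExteriorAlgebra.ι ℂ (fVec n k') * x)) -
             (eCoord n j (fVec n k')) •
              (ExteriorAlgebra.ι ℂ (fVec n j) * (ExteriorAlgebra.ι ℂ (eVec n j') * x)))) =
          ∑ k', Φ j k' •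
            (ExteriorAlgebra.ι ℂ (fVec n j) * (ExteriorAlgebra.ι ℂ (fVec n k') * x)) := by
        intro j
        rw [Finset.sum_comm]
        refine Finset.sum_congr rfl fun k' _ => ?_
        simp [eCoord, eVec, fVec, Pi.single_apply, ite_smul, smul_ite]
      simp only [step]
      exact sum_wedge_zero (fun j k => Φ j k) hsymm (fVec n) x
  · have := key_comm Φ (fun j => eVec n j) (fun j => fCoord n j) ?_
    · simpa [LamB] using this
    · intro x
      have step : ∀ j : Fin n,
          (∑ j', ∑ k', Φ j' k' •
            ((fCoord n j (eVec n j')) •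
              (ExteriorAlgebra.ι ℂ (eVec n j) * (ExteriorAlgebra.ι ℂ (fVec n k') * x)) -
             (fCoord n j (fVec n k')) •
              (ExteriorAlgebra.ι ℂ (eVec n j) * (ExteriorAlgebra.ι ℂ (eVec n j') * x)))) =
          ∑ j', (-(Φ j' j)) •
            (ExteriorAlgebra.ι ℂ (eVec n j) * (ExteriorAlgebra.ι ℂ (eVec n j') * x)) := by
        intro j
        refine Finset.sum_congr rfl fun j' _ => ?_
        simp [fCoord, eVec, fVec, Pi.single_apply, ite_smul, smul_ite]
      simp only [step]
      exact sum_wedge_zero (fun j k => -(Φ k j)) (fun j k => by show -(Φ k j) = -(Φ j k); rw [hsymm k j])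
        (eVec n) x
end
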